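/- arXiv:1310.3521 — 2 statements merged into one kernel-verified Lean document; each statement's English description precedes it below -/
import Mathlib

section
/- Under strict monotonicity of f_1 and f_2 (Axiom 1) and weak monotonicity of the middleman's net income function π in each argument (Axiom 2), the strategy profile with s_1 = s_2 = 1 and fees (ρ_1, ρ_2) = (f_1(1,1), f_2(1,1)) is a Nash equilibrium of the three-player game: no user can improve her payoff by changing her participation level, and the middleman cannot improve her payoff by changing the fee vector. -/
open Set

/-- User 1's payoff. -/
noncomputable def pay1 (f1 : ℝ → ℝ → ℝ) (ρ1 s1 s2 : ℝ) : ℝ :=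
  if ρ1 ≤ f1 s1 s2 then f1 s1 s2 - ρ1 else 0

/-- User 2's payoff. -/
noncomputable def pay2 (f2 : ℝ → ℝ → ℝ) (ρ2 s1 s2 : ℝ) : ℝ :=
  if ρ2 ≤ f2 s1 s2 then f2 s1 s2 - ρ2 else 0

/-- The middleman's payoff. -/
noncomputable def payM (π : ℝ → ℝ → ℝ → ℝ → ℝ) (f1 f2 : ℝ → ℝ → ℝ)
    (ρ1 ρ2 s1 s2 : ℝ) : ℝ :=
  if ρ1 ≤ f1 s1 s2 ∧ ρ2 ≤ f2 s1 s2 then π ρ1 ρ2 s1 s2 else 0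

/-- Under Axiom 1 (strict monotonicity of `f1, f2` in each argument) and Axiom 2
(weak monotonicity of the middleman's net income `π` in each argument), the profile
`s1 = s2 = 1`, `(ρ1, ρ2) = (f1 1 1, f2 1 1)` is a Nash equilibrium: no user can
improve by changing her participation level and the middleman cannot improve by
changing the fee vector. -/
theorem full_extraction_nash_equilibrium
    (f1 f2 : ℝ → ℝ → ℝ) (π : ℝ → ℝ → ℝ → ℝ → ℝ)
    (hf1nn : ∀ x ∈ Icc (0:ℝ) 1, ∀ y ∈ Icc (0:ℝ) 1, 0 ≤ f1 x y)
    (hf2nn : ∀ x ∈ Icc (0:ℝ) 1, ∀ y ∈ Icc (0:ℝ) 1, 0 ≤ f2 x y)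
    (hf1a : ∀ y ∈ Icc (0:ℝ) 1, StrictMonoOn (fun x => f1 x y) (Icc (0:ℝ) 1))
    (hf1b : ∀ x ∈ Icc (0:ℝ) 1, StrictMonoOn (fun y => f1 x y) (Icc (0:ℝ) 1))
    (hf2a : ∀ y ∈ Icc (0:ℝ) 1, StrictMonoOn (fun x => f2 x y) (Icc (0:ℝ) 1))
    (hf2b : ∀ x ∈ Icc (0:ℝ) 1, StrictMonoOn (fun y => f2 x y) (Icc (0:ℝ) 1))
    (hπnn : ∀ ρ1 ∈ Icc (0:ℝ) 1, ∀ ρ2 ∈ Icc (0:ℝ) 1, ∀ s1 ∈ Icc (0:ℝ) 1,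
      ∀ s2 ∈ Icc (0:ℝ) 1, 0 ≤ π ρ1 ρ2 s1 s2)
    (hπ : ∀ ρ1 ∈ Icc (0:ℝ) 1, ∀ ρ2 ∈ Icc (0:ℝ) 1, ∀ s1 ∈ Icc (0:ℝ) 1,
      ∀ s2 ∈ Icc (0:ℝ) 1, ∀ ρ1' ∈ Icc (0:ℝ) 1, ∀ ρ2' ∈ Icc (0:ℝ) 1,
      ∀ s1' ∈ Icc (0:ℝ) 1, ∀ s2' ∈ Icc (0:ℝ) 1,
      ρ1 ≤ ρ1' → ρ2 ≤ ρ2' → s1 ≤ s1' → s2 ≤ s2' →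
        π ρ1 ρ2 s1 s2 ≤ π ρ1' ρ2' s1' s2')
    (hF1 : f1 1 1 ≤ 1) (hF2 : f2 1 1 ≤ 1) :
    (∀ s1' ∈ Icc (0:ℝ) 1,
        pay1 f1 (f1 1 1) s1' 1 ≤ pay1 f1 (f1 1 1) 1 1) ∧
    (∀ s2' ∈ Icc (0:ℝ) 1,
        pay2 f2 (f2 1 1) 1 s2' ≤ pay2 f2 (f2 1 1) 1 1) ∧
    (∀ ρ1' ∈ Icc (0:ℝ) 1, ∀ ρ2' ∈ Icc (0:ℝ) 1,
        payM π f1 f2 ρ1' ρ2' 1 1 ≤ payM π f1 f2 (f1 1 1) (f2 1 1) 1 1) := by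
  have h1 : (1:ℝ) ∈ Icc (0:ℝ) 1 := ⟨zero_le_one, le_refl 1⟩
  have hf1m : f1 1 1 ∈ Icc (0:ℝ) 1 := ⟨hf1nn 1 h1 1 h1, hF1⟩
  have hf2m : f2 1 1 ∈ Icc (0:ℝ) 1 := ⟨hf2nn 1 h1 1 h1, hF2⟩
  refine ⟨?_, ?_, ?_⟩
  · intro s1' hs1'
    have hpay11 : pay1 f1 (f1 1 1) 1 1 = 0 := by simp [pay1]
    rw [hpay11]
    rcases lt_or_eq_of_le hs1'.2 with h | h
    · have : f1 s1' 1 < f1 1 1 := hf1a 1 h1 hs1' h1 h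
      simp [pay1, not_le.mpr this]
    · subst h; simp [pay1]
  · intro s2' hs2'
    have hpay11 : pay2 f2 (f2 1 1) 1 1 = 0 := by simp [pay2]
    rw [hpay11]
    rcases lt_or_eq_of_le hs2'.2 with h | h
    · have : f2 1 s2' < f2 1 1 := hf2b 1 h1 hs2' h1 h
      simp [pay2, not_le.mpr this]
    · subst h; simp [pay2]
  · intro ρ1' hρ1' ρ2' hρ2'
    have hgoal : payM π f1 f2 (f1 1 1) (f2 1 1) 1 1 = π (f1 1 1) (f2 1 1) 1 1 := by
      simp [payM]
    rw [hgoal]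
    by_cases hc : ρ1' ≤ f1 1 1 ∧ ρ2' ≤ f2 1 1
    · rw [payM, if_pos hc]
      exact hπ ρ1' hρ1' ρ2' hρ2' 1 h1 1 h1 (f1 1 1) hf1m (f2 1 1) hf2m 1 h1 1 h1
        hc.1 hc.2 le_rfl le_rfl
    · rw [payM, if_neg hc]
      exact hπnn (f1 1 1) hf1m (f2 1 1) hf2m 1 h1 1 h1
end

section
/- Assume π : [0,1]² × [0,1]² → ℝ≥0 is weakly increasing in each argument, f_1, f_2 strictly increasing in each argument, and s*_1, s*_2 < 1. Let F = (f_1(1,1), f_2(1,1)) and φ = (f_1(s*_1,s*_2), f_2(s*_1,s*_2)). Then over all fee vectors ρ with ρ_i ≤ f_i(1,1) for both i, the ambiguity-modified payoff π̄_M(ρ,1,1) is maximized either at ρ = F or at ρ = φ; i.e. max over ρ of π̄_M(ρ,1,1) = max{π̄_M(F,1,1), π̄_M(φ,1,1)}. -/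
open Set

/-- The middleman's ambiguity-modified payoff at usage levels `s1 = s2 = 1`:
`λ·M(ρ) + γ·m(ρ) + (1-λ-γ)·π_M(ρ,1,1)`, with optimistic payoff
`M(ρ) = π(ρ,1,1)·1[ρ ≤ F]`, pessimistic payoff `m(ρ) = π(ρ,s1*,s2*)·1[ρ ≤ φ]`
and `π_M(ρ,1,1) = π(ρ,1,1)·1[ρ ≤ F]` (inequalities componentwise). -/
noncomputable def barPiM (π : ℝ → ℝ → ℝ → ℝ → ℝ) (f1 f2 : ℝ → ℝ → ℝ)
    (lam γ s1s s2s ρ1 ρ2 : ℝ) : ℝ :=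
  lam * (if ρ1 ≤ f1 1 1 ∧ ρ2 ≤ f2 1 1 then π ρ1 ρ2 1 1 else 0)
    + γ * (if ρ1 ≤ f1 s1s s2s ∧ ρ2 ≤ f2 s1s s2s then π ρ1 ρ2 s1s s2s else 0)
    + (1 - lam - γ) * (if ρ1 ≤ f1 1 1 ∧ ρ2 ≤ f2 1 1 then π ρ1 ρ2 1 1 else 0)

/-- Over all fee vectors `ρ` with `0 ≤ ρ_i ≤ f_i(1,1)`, the ambiguity-modified
payoff `π̄_M(ρ,1,1)` attains its maximum either at `ρ = F = (f1 1 1, f2 1 1)`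
or at `ρ = φ = (f1 s1* s2*, f2 s1* s2*)`:
`max_ρ π̄_M(ρ,1,1) = max {π̄_M(F,1,1), π̄_M(φ,1,1)}`. -/
theorem barPiM_max_at_F_or_phi
    (π : ℝ → ℝ → ℝ → ℝ → ℝ) (f1 f2 : ℝ → ℝ → ℝ)
    (lam γ s1s s2s : ℝ)
    (hs1 : s1s ∈ Ico (0:ℝ) 1) (hs2 : s2s ∈ Ico (0:ℝ) 1)
    (hlam : 0 ≤ lam) (hγ0 : 0 ≤ γ) (hprop : lam + γ ≤ 1)
    (hf1nn : ∀ x ∈ Icc (0:ℝ) 1, ∀ y ∈ Icc (0:ℝ) 1, 0 ≤ f1 x y)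
    (hf2nn : ∀ x ∈ Icc (0:ℝ) 1, ∀ y ∈ Icc (0:ℝ) 1, 0 ≤ f2 x y)
    (hf1a : ∀ y ∈ Icc (0:ℝ) 1, StrictMonoOn (fun x => f1 x y) (Icc (0:ℝ) 1))
    (hf1b : ∀ x ∈ Icc (0:ℝ) 1, StrictMonoOn (fun y => f1 x y) (Icc (0:ℝ) 1))
    (hf2a : ∀ y ∈ Icc (0:ℝ) 1, StrictMonoOn (fun x => f2 x y) (Icc (0:ℝ) 1))
    (hf2b : ∀ x ∈ Icc (0:ℝ) 1, StrictMonoOn (fun y => f2 x y) (Icc (0:ℝ) 1))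
    (hF1 : f1 1 1 ≤ 1) (hF2 : f2 1 1 ≤ 1)
    (hπnn : ∀ ρ1 ∈ Icc (0:ℝ) 1, ∀ ρ2 ∈ Icc (0:ℝ) 1, ∀ s1 ∈ Icc (0:ℝ) 1,
      ∀ s2 ∈ Icc (0:ℝ) 1, 0 ≤ π ρ1 ρ2 s1 s2)
    (hπ : ∀ ρ1 ∈ Icc (0:ℝ) 1, ∀ ρ2 ∈ Icc (0:ℝ) 1, ∀ s1 ∈ Icc (0:ℝ) 1,
      ∀ s2 ∈ Icc (0:ℝ) 1, ∀ ρ1' ∈ Icc (0:ℝ) 1, ∀ ρ2' ∈ Icc (0:ℝ) 1,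
      ∀ s1' ∈ Icc (0:ℝ) 1, ∀ s2' ∈ Icc (0:ℝ) 1,
      ρ1 ≤ ρ1' → ρ2 ≤ ρ2' → s1 ≤ s1' → s2 ≤ s2' →
        π ρ1 ρ2 s1 s2 ≤ π ρ1' ρ2' s1' s2') :
    IsGreatest
      {v : ℝ | ∃ ρ1 ρ2 : ℝ, 0 ≤ ρ1 ∧ 0 ≤ ρ2 ∧ ρ1 ≤ f1 1 1 ∧ ρ2 ≤ f2 1 1 ∧
        v = barPiM π f1 f2 lam γ s1s s2s ρ1 ρ2}
      (max (barPiM π f1 f2 lam γ s1s s2s (f1 1 1) (f2 1 1))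
        (barPiM π f1 f2 lam γ s1s s2s (f1 s1s s2s) (f2 s1s s2s))) := by
  obtain ⟨hs1a, hs1b⟩ := hs1
  obtain ⟨hs2a, hs2b⟩ := hs2
  have h01 : (1:ℝ) ∈ Icc (0:ℝ) 1 := ⟨zero_le_one, le_refl 1⟩
  have hms1 : s1s ∈ Icc (0:ℝ) 1 := ⟨hs1a, hs1b.le⟩
  have hms2 : s2s ∈ Icc (0:ℝ) 1 := ⟨hs2a, hs2b.le⟩
  have hφ1F : f1 s1s s2s < f1 1 1 :=
    lt_trans (hf1b s1s hms1 hms2 h01 hs2b) (hf1a 1 h01 hms1 h01 hs1b)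
  have hφ2F : f2 s1s s2s < f2 1 1 :=
    lt_trans (hf2b s1s hms1 hms2 h01 hs2b) (hf2a 1 h01 hms1 h01 hs1b)
  have hφ1nn : 0 ≤ f1 s1s s2s := hf1nn _ hms1 _ hms2
  have hφ2nn : 0 ≤ f2 s1s s2s := hf2nn _ hms1 _ hms2
  have hF1nn : 0 ≤ f1 1 1 := hf1nn _ h01 _ h01
  have hF2nn : 0 ≤ f2 1 1 := hf2nn _ h01 _ h01
  have hF1m : f1 1 1 ∈ Icc (0:ℝ) 1 := ⟨hF1nn, hF1⟩
  have hF2m : f2 1 1 ∈ Icc (0:ℝ) 1 := ⟨hF2nn, hF2⟩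
  have hφ1m : f1 s1s s2s ∈ Icc (0:ℝ) 1 := ⟨hφ1nn, le_trans hφ1F.le hF1⟩
  have hφ2m : f2 s1s s2s ∈ Icc (0:ℝ) 1 := ⟨hφ2nn, le_trans hφ2F.le hF2⟩
  have hπFnn : 0 ≤ π (f1 1 1) (f2 1 1) 1 1 := hπnn _ hF1m _ hF2m _ h01 _ h01
  have hrest : 0 ≤ 1 - lam - γ := by linarith
  constructor
  · rcases max_choice (barPiM π f1 f2 lam γ s1s s2s (f1 1 1) (f2 1 1))
      (barPiM π f1 f2 lam γ s1s s2s (f1 s1s s2s) (f2 s1s s2s)) with h | h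
    · rw [h]; exact ⟨f1 1 1, f2 1 1, hF1nn, hF2nn, le_refl _, le_refl _, rfl⟩
    · rw [h]; exact ⟨f1 s1s s2s, f2 s1s s2s, hφ1nn, hφ2nn, hφ1F.le, hφ2F.le, rfl⟩
  · rintro v ⟨ρ1, ρ2, h0a, h0b, h1, h2, rfl⟩
    have hρ1m : ρ1 ∈ Icc (0:ℝ) 1 := ⟨h0a, le_trans h1 hF1⟩
    have hρ2m : ρ2 ∈ Icc (0:ℝ) 1 := ⟨h0b, le_trans h2 hF2⟩
    by_cases hc : ρ1 ≤ f1 s1s s2s ∧ ρ2 ≤ f2 s1s s2s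
    · refine le_trans ?_ (le_max_right _ _)
      simp only [barPiM, if_pos hc, if_pos (And.intro h1 h2),
        if_pos (And.intro (le_refl (f1 s1s s2s)) (le_refl (f2 s1s s2s))),
        if_pos (And.intro hφ1F.le hφ2F.le)]
      have hA := hπ _ hρ1m _ hρ2m _ h01 _ h01 _ hφ1m _ hφ2m _ h01 _ h01 hc.1 hc.2 le_rfl le_rfl
      have hB := hπ _ hρ1m _ hρ2m _ hms1 _ hms2 _ hφ1m _ hφ2m _ hms1 _ hms2 hc.1 hc.2 le_rfl le_rfl
      nlinarith [mul_le_mul_of_nonneg_left hA hlam, mul_le_mul_of_nonneg_left hB hγ0,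
        mul_le_mul_of_nonneg_left hA hrest]
    · refine le_trans ?_ (le_max_left _ _)
      have hnφ : ¬ (f1 1 1 ≤ f1 s1s s2s ∧ f2 1 1 ≤ f2 s1s s2s) :=
        fun h => absurd h.1 (not_le.mpr hφ1F)
      simp only [barPiM, if_neg hc, if_neg hnφ,
        if_pos (And.intro (le_refl (f1 1 1)) (le_refl (f2 1 1)))]
      have hI : (if ρ1 ≤ f1 1 1 ∧ ρ2 ≤ f2 1 1 then π ρ1 ρ2 1 1 else 0)
          ≤ π (f1 1 1) (f2 1 1) 1 1 := by
        split_ifs with h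
        · exact hπ _ hρ1m _ hρ2m _ h01 _ h01 _ hF1m _ hF2m _ h01 _ h01 h1 h2 le_rfl le_rfl
        · exact hπFnn
      nlinarith [mul_le_mul_of_nonneg_left hI hlam, mul_le_mul_of_nonneg_left hI hrest]
end
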